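/- Let p be a positive integer and let A = (a_1, ..., a_n) be positive integers with gcd(a_1, ..., a_n) = 1, and suppose p divides a_i for 1 ≤ i ≤ e and p does not divide a_j for e+1 ≤ j ≤ n (where 0 ≤ e < n). Then the quotient ⟨a_1, ..., a_n⟩/p equals the additive submonoid of ℕ generated by the set {a_1/p, a_2/p, ..., a_e/p} ∪ {m ∈ ℕ : p·m ∈ ⟨a_{e+1}, ..., a_n⟩}. -/

import Mathlib

/-- Equation (10): if `p ∣ aᵢ` for `i < e` and `p ∤ aⱼ` for `j ≥ e`, then
`⟨a₁,...,aₙ⟩/p = ⟨a₁/p, ..., a_e/p, ⟨a_{e+1},...,aₙ⟩/p⟩`. -/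
theorem quotient_split_by_divisibility
    (p n e : ℕ) (hp : 0 < p) (he : e < n) (a : Fin n → ℕ)
    (ha : ∀ i, 0 < a i) (hgcd : Finset.univ.gcd a = 1)
    (hdvd : ∀ i : Fin n, (i : ℕ) < e → p ∣ a i)
    (hndvd : ∀ j : Fin n, e ≤ (j : ℕ) → ¬ p ∣ a j) :
    {m : ℕ | p * m ∈ AddSubmonoid.closure (Set.range a)} =
      ↑(AddSubmonoid.closure
        ({x : ℕ | ∃ i : Fin n, (i : ℕ) < e ∧ x = a i / p} ∪
         {m : ℕ | p * m ∈
            AddSubmonoid.closure {x : ℕ | ∃ j : Fin n, e ≤ (j : ℕ) ∧ x = a j}})) := by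
  classical
  set H : Set ℕ := {x : ℕ | ∃ i : Fin n, (i : ℕ) < e ∧ x = a i} with hH
  set T : Set ℕ := {x : ℕ | ∃ j : Fin n, e ≤ (j : ℕ) ∧ x = a j} with hT
  set Hd : Set ℕ := {x : ℕ | ∃ i : Fin n, (i : ℕ) < e ∧ x = a i / p} with hHd
  have hrange : Set.range a = H ∪ T := by
    ext x
    constructor
    · rintro ⟨i, rfl⟩
      rcases lt_or_ge (i : ℕ) e with h | h
      · exact Or.inl ⟨i, h, rfl⟩
      · exact Or.inr ⟨i, h, rfl⟩
    · rintro (⟨i, _, rfl⟩ | ⟨i, _, rfl⟩) <;> exact ⟨i, rfl⟩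
  -- every element of closure H is p * s' with s' ∈ closure Hd
  have key : ∀ s ∈ AddSubmonoid.closure H,
      ∃ s', s = p * s' ∧ s' ∈ AddSubmonoid.closure Hd := by
    intro s hs
    induction hs using AddSubmonoid.closure_induction with
    | mem x hx =>
      obtain ⟨i, hi, rfl⟩ := hx
      obtain ⟨c, hc⟩ := hdvd i hi
      refine ⟨a i / p, ?_, AddSubmonoid.subset_closure ⟨i, hi, rfl⟩⟩
      rw [hc]
      rw [Nat.mul_div_cancel_left _ hp]
    | zero => exact ⟨0, by simp, zero_mem _⟩
    | add x y hx hy ihx ihy =>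
      obtain ⟨x', rfl, hx'⟩ := ihx
      obtain ⟨y', rfl, hy'⟩ := ihy
      exact ⟨x' + y', by ring, add_mem hx' hy'⟩
  ext m
  simp only [Set.mem_setOf_eq, SetLike.mem_coe]
  constructor
  · intro hm
    rw [hrange, AddSubmonoid.closure_union, AddSubmonoid.mem_sup] at hm
    obtain ⟨s, hs, t, ht, hst⟩ := hm
    obtain ⟨s', rfl, hs'⟩ := key s hs
    have hle : s' ≤ m := by
      nlinarith [Nat.le.intro hst]
    have htval : p * (m - s') = t := by
      rw [Nat.mul_sub]
      exact (Nat.eq_sub_of_add_eq' hst).symm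
    have h1 : s' ∈ AddSubmonoid.closure (Hd ∪ {m : ℕ | p * m ∈ AddSubmonoid.closure T}) :=
      AddSubmonoid.closure_mono Set.subset_union_left hs'
    have h2 : (m - s') ∈ AddSubmonoid.closure (Hd ∪ {m : ℕ | p * m ∈ AddSubmonoid.closure T}) :=
      AddSubmonoid.subset_closure (Or.inr (by simp only [Set.mem_setOf_eq, htval]; exact ht))
    have := add_mem h1 h2
    rwa [Nat.add_sub_cancel' hle] at this
  · intro hm
    induction hm using AddSubmonoid.closure_induction with
    | mem x hx =>
      rcases hx with ⟨i, hi, rfl⟩ | hx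
      · obtain ⟨c, hc⟩ := hdvd i hi
        have : p * (a i / p) = a i := by rw [hc, Nat.mul_div_cancel_left _ hp]
        rw [this]
        exact AddSubmonoid.subset_closure ⟨i, rfl⟩
      · exact AddSubmonoid.closure_mono (by rw [hrange]; exact Set.subset_union_right) hx
    | zero => simp only [mul_zero]; exact zero_mem _
    | add x y hx hy ihx ihy =>
      rw [mul_add]
      exact add_mem ihx ihy
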